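/- arXiv:0905.4253 — 4 statements merged into one kernel-verified Lean document; each statement's English description precedes it below -/
import Mathlib

section
/- Define η_a(u) = q_{a+1}(u) + (1/2)(-1)^{r-1} q_a(u) + (1/2)δ_{a,0} for a ≥ 0 (working over a ring in which 2 is invertible). Then for every 0 ≤ j ≤ r-1: ∑_{μ=0}^{r-j-1} η_μ(u) a_{μ+j+1}(u) = -2·δ_{(r-j odd)}·a_j(u) + δ_{(j even)}·a_{j+1}(u). -/
open Finset

/-- Generating function `∏ i, (1 + uᵢ t)/(1 - uᵢ t)` in `R[[t]]`, where the factor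
`1/(1 - uᵢ t)` is interpreted as the power series `∑ₖ uᵢ^k t^k`. -/
noncomputable def schurQSeries {R : Type*} [CommRing R] {r : ℕ} (u : Fin r → R) :
    PowerSeries R :=
  ∏ i : Fin r,
    ((1 + PowerSeries.C (u i) * PowerSeries.X) * PowerSeries.mk (fun k => u i ^ k))

/-- The Schur q-function `q_a(u)`: the coefficient of `t^a` in the generating function. -/
noncomputable def schurQ {R : Type*} [CommRing R] {r : ℕ} (u : Fin r → R) (a : ℕ) : R :=
  PowerSeries.coeff a (schurQSeries u)

/-- The signed elementary symmetric function `a_j(u) = (-1)^{r-j} ε_{r-j}(u)`, i.e. the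
coefficient of `t^j` in `∏ i, (t - uᵢ)`. -/
noncomputable def signedESymm {R : Type*} [CommRing R] {r : ℕ} (u : Fin r → R) (j : ℕ) : R :=
  (∏ i : Fin r, (Polynomial.X - Polynomial.C (u i))).coeff j

/-- `η_a(u) = q_{a+1}(u) + (1/2)(-1)^{r-1} q_a(u) + (1/2)δ_{a,0}`. -/
noncomputable def etaSeq {R : Type*} [CommRing R] [Invertible (2 : R)] {r : ℕ}
    (u : Fin r → R) (a : ℕ) : R :=
  schurQ u (a + 1) + ⅟(2 : R) * (-1) ^ (r - 1) * schurQ u a +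
    ⅟(2 : R) * (if a = 0 then 1 else 0)

section Aux

variable {R : Type*} [CommRing R] {r : ℕ} (u : Fin r → R)

lemma geom_inv (a : R) :
    ((1 - PowerSeries.C a * PowerSeries.X) * PowerSeries.mk fun k => a ^ k) = 1 := by
  ext n
  rw [sub_mul, one_mul, mul_assoc, map_sub]
  cases n with
  | zero => simp
  | succ n =>
    rw [PowerSeries.coeff_C_mul, PowerSeries.coeff_succ_X_mul]
    simp [pow_succ, mul_comm]

lemma key_prod :
    schurQSeries u * ∏ i : Fin r, (1 - PowerSeries.C (u i) * PowerSeries.X) =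
      ∏ i : Fin r, (1 + PowerSeries.C (u i) * PowerSeries.X) := by
  rw [schurQSeries, ← Finset.prod_mul_distrib]
  refine Finset.prod_congr rfl fun i _ => ?_
  rw [mul_assoc, mul_comm (PowerSeries.mk _), geom_inv, mul_one]

lemma reflect_linear (a : R) :
    Polynomial.reflect 1 (Polynomial.X - Polynomial.C a) =
      1 - Polynomial.C a * Polynomial.X := by
  ext i
  rw [Polynomial.coeff_reflect]
  match i with
  | 0 => simp [Polynomial.revAt_le]
  | 1 => simp [Polynomial.revAt_le, Polynomial.coeff_one]
  | (n+2) =>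
    rw [← Polynomial.revAtFun_eq, Polynomial.revAtFun, if_neg (by omega)]
    simp [Polynomial.coeff_X, Polynomial.coeff_one, Polynomial.coeff_C]

lemma reflect_prod (s : Finset (Fin r)) :
    Polynomial.reflect s.card (∏ i ∈ s, (Polynomial.X - Polynomial.C (u i))) =
      ∏ i ∈ s, (1 - Polynomial.C (u i) * Polynomial.X) := by
  induction s using Finset.cons_induction with
  | empty => simp
  | cons a s ha ih =>
    have hdeg : (∏ i ∈ s, (Polynomial.X - Polynomial.C (u i))).natDegree ≤ s.card := by
      have h1 : ∀ i ∈ s, (Polynomial.X - Polynomial.C (u i)).natDegree ≤ 1 :=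
        fun i _ => Polynomial.natDegree_X_sub_C_le _
      refine le_trans (Polynomial.natDegree_prod_le s
        (fun i => Polynomial.X - Polynomial.C (u i)))
        (le_trans (Finset.sum_le_card_nsmul s _ 1 h1) (by simp))
    rw [Finset.prod_cons, Finset.prod_cons, Finset.card_cons, add_comm s.card 1,
      Polynomial.reflect_mul _ _ (Polynomial.natDegree_X_sub_C_le _) hdeg, ih,
      reflect_linear]

lemma coeff_Bprod (k : ℕ) (hk : k ≤ r) :
    PowerSeries.coeff k (∏ i : Fin r, (1 - PowerSeries.C (u i) * PowerSeries.X)) =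
      signedESymm u (r - k) := by
  have hcast : (∏ i : Fin r, (1 - PowerSeries.C (u i) * PowerSeries.X)) =
      ((∏ i : Fin r, (1 - Polynomial.C (u i) * Polynomial.X) : Polynomial R) :
        PowerSeries R) := by
    rw [← Polynomial.coeToPowerSeries.ringHom_apply, map_prod]
    refine Finset.prod_congr rfl fun i _ => ?_
    simp [map_sub, map_mul]
  rw [hcast, Polynomial.coeff_coe, ← reflect_prod u Finset.univ, Finset.card_univ,
    Fintype.card_fin, Polynomial.coeff_reflect, Polynomial.revAt_le hk]
  rfl

lemma rescale_Bprod :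
    PowerSeries.rescale (-1 : R)
        (∏ i : Fin r, (1 - PowerSeries.C (u i) * PowerSeries.X)) =
      ∏ i : Fin r, (1 + PowerSeries.C (u i) * PowerSeries.X) := by
  rw [map_prod]
  refine Finset.prod_congr rfl fun i _ => ?_
  ext n
  rw [PowerSeries.coeff_rescale]
  match n with
  | 0 => simp
  | 1 => simp
  | (n+2) =>
    simp [PowerSeries.coeff_one, PowerSeries.coeff_C_mul, PowerSeries.coeff_X]

lemma schurQ_zero : schurQ u 0 = 1 := by
  simp only [schurQ, schurQSeries, PowerSeries.coeff_zero_eq_constantCoeff, map_prod,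
    map_mul, map_add, map_one]
  simp [PowerSeries.constantCoeff_X]

lemma main_identity (n : ℕ) (hn : n ≤ r) :
    ∑ k ∈ Finset.range (n + 1), schurQ u k * signedESymm u (r - n + k) =
      (-1 : R) ^ n * signedESymm u (r - n) := by
  have h := congrArg (PowerSeries.coeff n) (key_prod u)
  rw [PowerSeries.coeff_mul, Finset.Nat.sum_antidiagonal_eq_sum_range_succ_mk,
    ← rescale_Bprod u, PowerSeries.coeff_rescale, coeff_Bprod u n hn] at h
  rw [← h]
  refine Finset.sum_congr rfl fun k hk => ?_
  rw [Finset.mem_range] at hk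
  rw [coeff_Bprod u (n - k) (by omega), show r - (n - k) = r - n + k by omega]
  rfl

end Aux

/-- for 0 ≤ j ≤ r-1,
∑_{μ=0}^{r-j-1} η_μ(u) a_{μ+j+1}(u) = -2·δ_{(r-j odd)}·a_j(u) + δ_{(j even)}·a_{j+1}(u). -/
theorem eta_signedESymm_identity {R : Type*} [CommRing R] [Invertible (2 : R)] {r : ℕ}
    (hr : 0 < r) (u : Fin r → R) :
    ∀ j < r, ∑ μ ∈ Finset.range (r - j), etaSeq u μ * signedESymm u (μ + j + 1) =
      -2 * (if Odd (r - j) then (1 : R) else 0) * signedESymm u j +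
        (if Even j then (1 : R) else 0) * signedESymm u (j + 1) := by
  intro j hj
  -- Sum 2 : ∑ q μ * a (μ + j + 1) = (-1)^(r-j-1) * a (j+1)
  have h2 : ∑ μ ∈ Finset.range (r - j), schurQ u μ * signedESymm u (μ + j + 1) =
      (-1 : R) ^ (r - j - 1) * signedESymm u (j + 1) := by
    have := main_identity u (r - j - 1) (by omega)
    rw [show r - j - 1 + 1 = r - j by omega, show r - (r - j - 1) = j + 1 by omega] at this
    rw [← this]
    exact Finset.sum_congr rfl fun k _ => by rw [show j + 1 + k = k + j + 1 by omega]
  -- Sum 1 : ∑ q (μ+1) * a (μ + j + 1) = (-1)^(r-j) * a j - a j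
  have h1 : ∑ μ ∈ Finset.range (r - j), schurQ u (μ + 1) * signedESymm u (μ + j + 1) =
      (-1 : R) ^ (r - j) * signedESymm u j - signedESymm u j := by
    have := main_identity u (r - j) (by omega)
    rw [show r - (r - j) = j by omega, Finset.sum_range_succ'] at this
    rw [schurQ_zero, one_mul] at this
    have hrw : ∑ μ ∈ Finset.range (r - j), schurQ u (μ + 1) * signedESymm u (j + (μ + 1)) =
        ∑ μ ∈ Finset.range (r - j), schurQ u (μ + 1) * signedESymm u (μ + j + 1) :=
      Finset.sum_congr rfl fun k _ => by rw [show j + (k + 1) = k + j + 1 by omega]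
    rw [hrw] at this
    rw [eq_sub_iff_add_eq, ← this, add_zero]
  -- Sum 3 : delta term
  have h3 : ∑ μ ∈ Finset.range (r - j),
      (⅟(2 : R) * (if μ = 0 then 1 else 0)) * signedESymm u (μ + j + 1) =
      ⅟(2 : R) * signedESymm u (j + 1) := by
    rw [Finset.sum_congr rfl (fun μ _ => show
        (⅟(2 : R) * (if μ = 0 then 1 else 0)) * signedESymm u (μ + j + 1) =
        (if μ = 0 then ⅟(2 : R) * signedESymm u (μ + j + 1) else 0) by
      split_ifs <;> simp)]
    rw [Finset.sum_ite_eq' (Finset.range (r - j)) 0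
      (fun μ => ⅟(2 : R) * signedESymm u (μ + j + 1))]
    rw [if_pos (Finset.mem_range.mpr (by omega))]
    norm_num
  have hsign : ((-1 : R)) ^ (r - 1) * (-1) ^ (r - j - 1) = (-1) ^ j := by
    rw [← pow_add, show (r - 1) + (r - j - 1) = j + 2 * (r - 1 - j) by omega,
      pow_add, pow_mul, neg_one_sq, one_pow, mul_one]
  -- split the sum
  have hsplit : ∑ μ ∈ Finset.range (r - j), etaSeq u μ * signedESymm u (μ + j + 1) =
      (∑ μ ∈ Finset.range (r - j), schurQ u (μ + 1) * signedESymm u (μ + j + 1)) +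
      ⅟(2 : R) * (-1) ^ (r - 1) *
        (∑ μ ∈ Finset.range (r - j), schurQ u μ * signedESymm u (μ + j + 1)) +
      (∑ μ ∈ Finset.range (r - j),
        (⅟(2 : R) * (if μ = 0 then 1 else 0)) * signedESymm u (μ + j + 1)) := by
    rw [Finset.mul_sum, ← Finset.sum_add_distrib, ← Finset.sum_add_distrib]
    refine Finset.sum_congr rfl fun μ _ => ?_
    rw [etaSeq]; ring
  rw [hsplit, h1, h2, h3]
  have hsign' : ⅟(2 : R) * (-1) ^ (r - 1) * ((-1 : R) ^ (r - j - 1) * signedESymm u (j + 1)) =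
      ⅟(2 : R) * ((-1) ^ j * signedESymm u (j + 1)) := by
    linear_combination (⅟(2 : R) * signedESymm u (j + 1)) * hsign
  rw [hsign']
  rcases Nat.even_or_odd (r - j) with hrj | hrj <;>
    rcases Nat.even_or_odd j with hjp | hjp
  · rw [hrj.neg_one_pow, hjp.neg_one_pow, if_neg (Nat.not_odd_iff_even.mpr hrj),
      if_pos hjp]
    linear_combination (signedESymm u (j + 1)) * invOf_mul_self (2 : R)
  · rw [hrj.neg_one_pow, hjp.neg_one_pow, if_neg (Nat.not_odd_iff_even.mpr hrj),
      if_neg (Nat.not_even_iff_odd.mpr hjp)]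
    ring
  · rw [hrj.neg_one_pow, hjp.neg_one_pow, if_pos hrj, if_pos hjp]
    linear_combination (signedESymm u (j + 1)) * invOf_mul_self (2 : R)
  · rw [hrj.neg_one_pow, hjp.neg_one_pow, if_pos hrj,
      if_neg (Nat.not_even_iff_odd.mpr hjp)]
    ring
end

section
/- With η_a(u) = q_{a+1}(u) + (1/2)(-1)^{r-1} q_a(u) + (1/2)δ_{a,0}, for all integers a ≥ 0 one has ∑_{μ=0}^r a_μ(u) η_{μ+a}(u) = 0. -/
open Finset

namespace SchurAux

open Polynomial

lemma geom_inv {R : Type*} [CommRing R] (c : R) :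
    ((1 : PowerSeries R) - PowerSeries.C c * PowerSeries.X) *
      PowerSeries.mk (fun k => c ^ k) = 1 := by
  ext n
  rw [sub_mul, one_mul, map_sub]
  cases n with
  | zero => simp [PowerSeries.coeff_mk, mul_assoc]
  | succ n =>
      rw [mul_assoc, PowerSeries.coeff_C_mul, PowerSeries.coeff_succ_X_mul]
      simp [PowerSeries.coeff_mk, pow_succ, mul_comm]

lemma reflect_one_X_sub_C {R : Type*} [CommRing R] (c : R) :
    reflect 1 (X - Polynomial.C c) = 1 - Polynomial.C c * X := by
  ext n
  rw [coeff_reflect]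
  match n with
  | 0 => simp [revAt_le]
  | 1 => simp [revAt_le, coeff_one]
  | (m+2) =>
      rw [revAt_eq_self_of_lt (by omega)]
      simp [coeff_X, coeff_one]

lemma reflect_one_X_add_C {R : Type*} [CommRing R] (c : R) :
    reflect 1 (X + Polynomial.C c) = 1 + Polynomial.C c * X := by
  ext n
  rw [coeff_reflect]
  match n with
  | 0 => simp [revAt_le]
  | 1 => simp [revAt_le, coeff_one]
  | (m+2) =>
      rw [revAt_eq_self_of_lt (by omega)]
      simp [coeff_X, coeff_one]

lemma reflect_prod' {R : Type*} [CommRing R] {ι : Type*} [DecidableEq ι] (s : Finset ι)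
    (f : ι → R[X]) (hf : ∀ i ∈ s, (f i).natDegree ≤ 1) :
    reflect s.card (∏ i ∈ s, f i) = ∏ i ∈ s, reflect 1 (f i) := by
  induction s using Finset.induction_on with
  | empty => simp
  | @insert a s h ih =>
      rw [Finset.prod_insert h, Finset.prod_insert h, Finset.card_insert_of_notMem h,
        add_comm s.card 1,
        reflect_mul (f a) _ (hf a (Finset.mem_insert_self a s))
          (le_trans (natDegree_prod_le _ _) (by
            calc ∑ i ∈ s, (f i).natDegree ≤ ∑ i ∈ s, 1 :=
              Finset.sum_le_sum (fun i hi => hf i (Finset.mem_insert_of_mem hi))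
            _ = s.card := by simp)),
        ih (fun i hi => hf i (Finset.mem_insert_of_mem hi))]

lemma deg_one_sub {R : Type*} [CommRing R] (c : R) :
    ((1 : R[X]) - Polynomial.C c * X).natDegree ≤ 1 :=
  (natDegree_sub_le _ _).trans
    (max_le (by simp) ((natDegree_C_mul_le _ _).trans natDegree_X_le))

lemma deg_one_add {R : Type*} [CommRing R] (c : R) :
    ((1 : R[X]) + Polynomial.C c * X).natDegree ≤ 1 :=
  (natDegree_add_le _ _).trans
    (max_le (by simp) ((natDegree_C_mul_le _ _).trans natDegree_X_le))

lemma deg_X_sub_C {R : Type*} [CommRing R] (c : R) :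
    (X - Polynomial.C c : R[X]).natDegree ≤ 1 :=
  (natDegree_sub_le _ _).trans (max_le natDegree_X_le (by simp))

lemma deg_X_add_C {R : Type*} [CommRing R] (c : R) :
    (X + Polynomial.C c : R[X]).natDegree ≤ 1 :=
  (natDegree_add_le _ _).trans (max_le natDegree_X_le (by simp))

lemma prod_deg_le {R : Type*} [CommRing R] {r : ℕ} (f : Fin r → R[X])
    (hf : ∀ i, (f i).natDegree ≤ 1) : (∏ i : Fin r, f i).natDegree ≤ r :=
  (natDegree_prod_le _ _).trans (by
    calc ∑ i : Fin r, (f i).natDegree ≤ ∑ _i : Fin r, 1 :=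
      Finset.sum_le_sum (fun i _ => hf i)
    _ = r := by simp)

/-- `p = reflect r w`. -/
lemma p_eq_reflect {R : Type*} [CommRing R] {r : ℕ} (u : Fin r → R) :
    (∏ i : Fin r, ((1 : R[X]) - Polynomial.C (u i) * X)) =
      reflect r (∏ i : Fin r, (X - Polynomial.C (u i))) := by
  have h := reflect_prod' (Finset.univ : Finset (Fin r))
    (fun i => (X - Polynomial.C (u i))) (fun i _ => deg_X_sub_C (u i))
  rw [Finset.card_univ, Fintype.card_fin] at h
  rw [h]
  exact (Finset.prod_congr rfl fun i _ => (reflect_one_X_sub_C (u i)).symm)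

lemma q_eq_reflect {R : Type*} [CommRing R] {r : ℕ} (u : Fin r → R) :
    (∏ i : Fin r, ((1 : R[X]) + Polynomial.C (u i) * X)) =
      reflect r (∏ i : Fin r, (X + Polynomial.C (u i))) := by
  have h := reflect_prod' (Finset.univ : Finset (Fin r))
    (fun i => (X + Polynomial.C (u i))) (fun i _ => deg_X_add_C (u i))
  rw [Finset.card_univ, Fintype.card_fin] at h
  rw [h]
  exact (Finset.prod_congr rfl fun i _ => (reflect_one_X_add_C (u i)).symm)

lemma p_coeff {R : Type*} [CommRing R] {r : ℕ} (u : Fin r → R) {μ : ℕ} (hμ : μ ≤ r) :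
    (∏ i : Fin r, ((1 : R[X]) - Polynomial.C (u i) * X)).coeff (r - μ) = signedESymm u μ := by
  rw [p_eq_reflect, coeff_reflect, revAt_le (Nat.sub_le _ _), Nat.sub_sub_self hμ, signedESymm]

lemma q_coeff_top {R : Type*} [CommRing R] {r : ℕ} (u : Fin r → R) :
    (∏ i : Fin r, ((1 : R[X]) + Polynomial.C (u i) * X)).coeff r = ∏ i : Fin r, u i := by
  rw [q_eq_reflect, coeff_reflect, revAt_le (le_refl r), Nat.sub_self]
  simp [coeff_zero_eq_eval_zero, eval_prod]

lemma a0_eq {R : Type*} [CommRing R] {r : ℕ} (u : Fin r → R) :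
    signedESymm u 0 = (-1 : R) ^ r * ∏ i : Fin r, u i := by
  rw [signedESymm]
  simp only [coeff_zero_eq_eval_zero, eval_prod, eval_sub, eval_X, eval_C, zero_sub]
  calc (∏ i : Fin r, -u i) = ∏ i : Fin r, ((-1) * u i) := by simp
  _ = (-1 : R) ^ r * ∏ i : Fin r, u i := by
      rw [Finset.prod_mul_distrib, Finset.prod_const, Finset.card_univ, Fintype.card_fin]

/-- The generating function identity `p(t) · F(t) = q(t)`. -/
lemma pF_eq_q {R : Type*} [CommRing R] {r : ℕ} (u : Fin r → R) :
    ((∏ i : Fin r, ((1 : R[X]) - Polynomial.C (u i) * X) : R[X]) : PowerSeries R) *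
      schurQSeries u =
    ((∏ i : Fin r, ((1 : R[X]) + Polynomial.C (u i) * X) : R[X]) : PowerSeries R) := by
  have hp : ((∏ i : Fin r, ((1 : R[X]) - Polynomial.C (u i) * X) : R[X]) : PowerSeries R) =
      ∏ i : Fin r, ((1 : PowerSeries R) - PowerSeries.C (u i) * PowerSeries.X) := by
    rw [← coeToPowerSeries.ringHom_apply, map_prod]
    exact Finset.prod_congr rfl fun i _ => by
      simp [coeToPowerSeries.ringHom_apply, Polynomial.coe_sub, Polynomial.coe_mul,
        Polynomial.coe_C, Polynomial.coe_X]
  have hq : ((∏ i : Fin r, ((1 : R[X]) + Polynomial.C (u i) * X) : R[X]) : PowerSeries R) =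
      ∏ i : Fin r, ((1 : PowerSeries R) + PowerSeries.C (u i) * PowerSeries.X) := by
    rw [← coeToPowerSeries.ringHom_apply, map_prod]
    exact Finset.prod_congr rfl fun i _ => by
      simp [coeToPowerSeries.ringHom_apply, Polynomial.coe_add, Polynomial.coe_mul,
        Polynomial.coe_C, Polynomial.coe_X]
  rw [hp, hq, schurQSeries, ← Finset.prod_mul_distrib]
  exact Finset.prod_congr rfl fun i _ => by
    rw [mul_left_comm, geom_inv, mul_one]

/-- The key identity `∑ μ a_μ q_{μ+b} = coeff_{r+b} ∏ (1 + uᵢ t)`. -/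
lemma key {R : Type*} [CommRing R] {r : ℕ} (u : Fin r → R) (b : ℕ) :
    ∑ μ ∈ Finset.range (r + 1), signedESymm u μ * schurQ u (μ + b) =
      (∏ i : Fin r, ((1 : R[X]) + Polynomial.C (u i) * X)).coeff (r + b) := by
  have h := congrArg (PowerSeries.coeff (r + b)) (pF_eq_q u)
  rw [PowerSeries.coeff_mul, Finset.Nat.sum_antidiagonal_eq_sum_range_succ_mk] at h
  simp only [Polynomial.coeff_coe] at h
  rw [← Finset.sum_subset (Finset.range_subset_range.mpr (by omega) :
      Finset.range (r + 1) ⊆ Finset.range (r + b + 1)) (fun k hk hk' => by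
    have hkr : r < k := by
      simp only [Finset.mem_range] at hk hk'
      omega
    rw [Polynomial.coeff_eq_zero_of_natDegree_lt
      ((prod_deg_le _ (fun i => deg_one_sub (u i))).trans_lt hkr), zero_mul])] at h
  rw [← Finset.sum_range_reflect] at h
  rw [← h]
  refine Finset.sum_congr rfl fun μ hμ => ?_
  have hμr : μ ≤ r := by simp only [Finset.mem_range] at hμ; omega
  have h1 : r + 1 - 1 - μ = r - μ := by omega
  have h2 : r + b - (r - μ) = μ + b := by omega
  rw [h1, h2, p_coeff u hμr, schurQ]

end SchurAux

/-- ∑_{μ=0}^r a_μ(u) η_{μ+a}(u) = 0 for all a ≥ 0. -/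
theorem signedESymm_eta_identity {R : Type*} [CommRing R] [Invertible (2 : R)] {r : ℕ}
    (hr : 0 < r) (u : Fin r → R) (a : ℕ) :
    ∑ μ ∈ Finset.range (r + 1), signedESymm u μ * etaSeq u (μ + a) = 0 := by
  classical
  have hqdeg : (∏ i : Fin r, ((1 : Polynomial R) + Polynomial.C (u i) * Polynomial.X)).natDegree ≤ r :=
    SchurAux.prod_deg_le _ (fun i => SchurAux.deg_one_add (u i))
  have hhigh : ∀ b, 1 ≤ b →
      (∏ i : Fin r, ((1 : Polynomial R) + Polynomial.C (u i) * Polynomial.X)).coeff (r + b) = 0 :=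
    fun b hb => Polynomial.coeff_eq_zero_of_natDegree_lt (hqdeg.trans_lt (by omega))
  simp only [etaSeq, mul_add, Finset.sum_add_distrib]
  have hsum1 : ∑ μ ∈ Finset.range (r + 1), signedESymm u μ * schurQ u (μ + a + 1) = 0 := by
    simp only [add_assoc]
    rw [SchurAux.key u (a + 1), hhigh (a + 1) (by omega)]
  have hsum2 : ∑ μ ∈ Finset.range (r + 1),
      signedESymm u μ * (⅟(2 : R) * (-1) ^ (r - 1) * schurQ u (μ + a)) =
      ⅟(2 : R) * (-1) ^ (r - 1) *
        (∏ i : Fin r, ((1 : Polynomial R) + Polynomial.C (u i) * Polynomial.X)).coeff (r + a) := by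
    rw [← SchurAux.key u a, Finset.mul_sum]
    exact Finset.sum_congr rfl fun μ _ => by ring
  rw [hsum1, hsum2]
  cases a with
  | zero =>
      have hsum3 : ∑ μ ∈ Finset.range (r + 1),
          signedESymm u μ * (⅟(2 : R) * (if μ + 0 = 0 then 1 else 0)) =
          signedESymm u 0 * ⅟(2 : R) := by
        rw [Finset.sum_eq_single 0 (fun b _ hb => by simp [hb]) (by simp)]
        simp
      rw [hsum3, Nat.add_zero r, SchurAux.q_coeff_top u, SchurAux.a0_eq u]
      have hpow : ((-1 : R)) ^ r = -(-1 : R) ^ (r - 1) := by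
        conv_lhs => rw [← Nat.succ_pred_eq_of_pos hr]
        rw [pow_succ, Nat.pred_eq_sub_one]
        ring
      rw [hpow]
      ring
  | succ n =>
      have hsum3 : ∑ μ ∈ Finset.range (r + 1),
          signedESymm u μ * (⅟(2 : R) * (if μ + (n + 1) = 0 then 1 else 0)) = 0 := by
        apply Finset.sum_eq_zero
        intro μ _
        simp
      rw [hsum3, hhigh (n + 1) (by omega)]
      ring
end

section
/- Suppose 2 is invertible in a commutative ring R and fix u_1,...,u_r ∈ R with signed elementary symmetric functions a_j(u). Suppose a sequence (ω_a)_{a≥0} in R satisfies: (i) ∑_{μ=0}^{r-j-1} ω_μ a_{μ+j+1}(u) = -2·δ_{(r-j odd)}·a_j(u) + δ_{(j even)}·a_{j+1}(u) for 0 ≤ j ≤ r-1, and (ii) ∑_{μ=0}^r a_μ(u) ω_{μ+a} = 0 for all a ≥ 0. Then ω_a = η_a(u) := q_{a+1}(u) + (1/2)(-1)^{r-1} q_a(u) + (1/2)δ_{a,0} for every a ≥ 0. Conversely, the sequence (η_a(u))_{a≥0} satisfies (i) and (ii). -/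
open Finset

namespace AdmAux

lemma geom_inv {R : Type*} [CommRing R] (a : R) :
    (1 - PowerSeries.C a * PowerSeries.X) * PowerSeries.mk (fun k => a ^ k) = 1 := by
  ext n
  cases n with
  | zero => simp
  | succ n =>
    simp only [sub_mul, one_mul, map_sub, PowerSeries.coeff_mk, mul_assoc,
      PowerSeries.coeff_C_mul, PowerSeries.coeff_succ_X_mul, PowerSeries.coeff_one,
      Nat.succ_ne_zero, if_false]
    ring

lemma reflect_prod {R : Type*} [CommRing R] {ι : Type*} (s : Finset ι) (f : ι → R) :
    Polynomial.reflect s.card (∏ i ∈ s, (Polynomial.X - Polynomial.C (f i))) =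
      ∏ i ∈ s, (1 - Polynomial.C (f i) * Polynomial.X) := by
  induction s using Finset.cons_induction with
  | empty => simp
  | cons a s ha ih =>
    rw [Finset.prod_cons, Finset.prod_cons, Finset.card_cons,
      show s.card + 1 = 1 + s.card from (add_comm _ _),
      Polynomial.reflect_mul _ _ (Polynomial.natDegree_X_sub_C_le _)
        ((Polynomial.natDegree_prod_le _ _).trans (by
          have h := Finset.sum_le_sum
            (f := fun i => (Polynomial.X - Polynomial.C (f i)).natDegree)
            (g := fun _ => 1) (s := s) (fun i _ => Polynomial.natDegree_X_sub_C_le (f i))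
          simpa using h)), ih]
    congr 1
    rw [Polynomial.reflect_sub, Polynomial.reflect_C,
      show (Polynomial.X : Polynomial R) = Polynomial.X ^ 1 from (pow_one _).symm,
      Polynomial.reflect_monomial]
    simp

variable {R : Type*} [CommRing R] {r : ℕ} (u : Fin r → R)

/-- `∏ (1 - uᵢ t)` as a power series. -/
noncomputable def Aps : PowerSeries R :=
  ∏ i : Fin r, (1 - PowerSeries.C (u i) * PowerSeries.X)

/-- `∏ (1 + uᵢ t)` as a power series. -/
noncomputable def Bps : PowerSeries R :=
  ∏ i : Fin r, (1 + PowerSeries.C (u i) * PowerSeries.X)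

lemma signedESymm_top : signedESymm u r = 1 := by
  nontriviality R
  have hm : (∏ i : Fin r, (Polynomial.X - Polynomial.C (u i))).Monic :=
    Polynomial.monic_prod_of_monic _ _ fun i _ => Polynomial.monic_X_sub_C _
  have hd : (∏ i : Fin r, (Polynomial.X - Polynomial.C (u i))).natDegree = r := by
    rw [Polynomial.natDegree_prod_of_monic _ _ fun i _ => Polynomial.monic_X_sub_C _]
    simp [Polynomial.natDegree_X_sub_C]
  have := hm.coeff_natDegree
  rwa [hd] at this

lemma natDegree_prod_le' : (∏ i : Fin r, (Polynomial.X - Polynomial.C (u i))).natDegree ≤ r := by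
  refine (Polynomial.natDegree_prod_le _ _).trans ?_
  have h := Finset.sum_le_sum
    (f := fun i => (Polynomial.X - Polynomial.C (u i)).natDegree)
    (g := fun _ => 1) (s := (Finset.univ : Finset (Fin r)))
    (fun i _ => Polynomial.natDegree_X_sub_C_le (u i))
  simpa using h

lemma coeff_Aps (n : ℕ) :
    PowerSeries.coeff n (Aps u) = if n ≤ r then signedESymm u (r - n) else 0 := by
  have hc : (Aps u) =
      ((∏ i : Fin r, (1 - Polynomial.C (u i) * Polynomial.X) : Polynomial R) :
        PowerSeries R) := by
    rw [Aps, ← Polynomial.coeToPowerSeries.ringHom_apply, map_prod]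
    simp only [map_sub, map_mul, map_one, Polynomial.coeToPowerSeries.ringHom_apply,
      Polynomial.coe_C, Polynomial.coe_X]
  have hrp := reflect_prod (Finset.univ : Finset (Fin r)) u
  rw [Finset.card_univ, Fintype.card_fin] at hrp
  rw [hc, Polynomial.coeff_coe, ← hrp, Polynomial.coeff_reflect]
  by_cases hn : n ≤ r
  · rw [if_pos hn, Polynomial.revAt_le hn]; rfl
  · rw [if_neg hn, Polynomial.revAt_eq_self_of_lt (lt_of_not_ge hn)]
    exact Polynomial.coeff_eq_zero_of_natDegree_lt
      (lt_of_le_of_lt (natDegree_prod_le' u) (lt_of_not_ge hn))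

lemma Bps_eq : Bps u = PowerSeries.rescale (-1 : R) (Aps u) := by
  rw [Aps, Bps, map_prod]
  refine Finset.prod_congr rfl fun i _ => ?_
  rw [map_sub, map_one, map_mul, PowerSeries.rescale_X]
  have hC : PowerSeries.rescale (-1 : R) (PowerSeries.C (u i)) = PowerSeries.C (u i) := by
    ext n
    simp only [PowerSeries.coeff_rescale, PowerSeries.coeff_C]
    split <;> simp_all
  rw [hC, show PowerSeries.C (-1 : R) = -1 from by simp]
  ring

lemma coeff_Bps (n : ℕ) :
    PowerSeries.coeff n (Bps u) =
      (-1) ^ n * (if n ≤ r then signedESymm u (r - n) else 0) := by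
  rw [Bps_eq, PowerSeries.coeff_rescale, coeff_Aps]

lemma AQ : Aps u * schurQSeries u = Bps u := by
  rw [Aps, schurQSeries, ← Finset.prod_mul_distrib, Bps]
  refine Finset.prod_congr rfl fun i _ => ?_
  calc (1 - PowerSeries.C (u i) * PowerSeries.X) *
        ((1 + PowerSeries.C (u i) * PowerSeries.X) * PowerSeries.mk (fun k => u i ^ k))
      = (1 + PowerSeries.C (u i) * PowerSeries.X) *
        ((1 - PowerSeries.C (u i) * PowerSeries.X) * PowerSeries.mk (fun k => u i ^ k)) := by
        ring
    _ = 1 + PowerSeries.C (u i) * PowerSeries.X := by rw [geom_inv, mul_one]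

lemma coeff_zero_Q : PowerSeries.coeff 0 (schurQSeries u) = 1 := by
  rw [schurQSeries, PowerSeries.coeff_zero_eq_constantCoeff, map_prod]
  refine Finset.prod_eq_one fun i _ => ?_
  simp

variable [Invertible (2 : R)]

lemma XE : PowerSeries.X * PowerSeries.mk (etaSeq u) =
    schurQSeries u - 1 +
      PowerSeries.C (⅟(2 : R) * (-1) ^ (r - 1)) * (PowerSeries.X * schurQSeries u) +
      PowerSeries.C (⅟(2 : R)) * PowerSeries.X := by
  ext n
  cases n with
  | zero =>
    simp only [PowerSeries.coeff_zero_X_mul, map_add, map_sub, PowerSeries.coeff_C_mul,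
      PowerSeries.coeff_one, PowerSeries.coeff_X, coeff_zero_Q]
    simp
  | succ n =>
    simp only [map_add, map_sub, PowerSeries.coeff_C_mul, PowerSeries.coeff_succ_X_mul,
      PowerSeries.coeff_mk, PowerSeries.coeff_one, PowerSeries.coeff_X,
      Nat.succ_ne_zero, if_false, etaSeq, schurQ]
    have : (if n + 1 = 1 then (1:R) else 0) = (if n = 0 then (1:R) else 0) := by
      by_cases h : n = 0 <;> simp [h]
    rw [this]
    ring

lemma main_id : Aps u * (PowerSeries.X * PowerSeries.mk (etaSeq u)) =
    Bps u - Aps u +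
      PowerSeries.C (⅟(2 : R) * (-1) ^ (r - 1)) * (PowerSeries.X * Bps u) +
      PowerSeries.C (⅟(2 : R)) * (PowerSeries.X * Aps u) := by
  rw [XE]
  linear_combination
    (1 + PowerSeries.C (⅟(2 : R) * (-1) ^ (r - 1)) * PowerSeries.X) * AQ u

lemma coeff_AE (m : ℕ) :
    PowerSeries.coeff m (Aps u * PowerSeries.mk (etaSeq u)) =
      ∑ k ∈ Finset.range (m + 1),
        (if k ≤ r then signedESymm u (r - k) else 0) * etaSeq u (m - k) := by
  rw [PowerSeries.coeff_mul, Finset.Nat.sum_antidiagonal_eq_sum_range_succ_mk]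
  exact Finset.sum_congr rfl fun k _ => by rw [coeff_Aps, PowerSeries.coeff_mk]

lemma eta_rel_i : ∀ j < r,
    ∑ μ ∈ Finset.range (r - j), etaSeq u μ * signedESymm u (μ + j + 1) =
      -2 * (if Odd (r - j) then (1 : R) else 0) * signedESymm u j +
        (if Even j then (1 : R) else 0) * signedESymm u (j + 1) := by
  intro j hj
  have h := congrArg (PowerSeries.coeff (r - j)) (main_id u)
  rw [mul_left_comm] at h
  have hrj : r - j = (r - 1 - j) + 1 := by omega
  rw [hrj, PowerSeries.coeff_succ_X_mul, coeff_AE] at h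
  rw [map_add, map_add, map_sub, PowerSeries.coeff_C_mul, PowerSeries.coeff_C_mul,
    PowerSeries.coeff_succ_X_mul, PowerSeries.coeff_succ_X_mul, coeff_Aps, coeff_Aps,
    coeff_Bps, coeff_Bps, ← hrj] at h
  -- simplify the coefficient side
  have hb1 : r - j ≤ r := Nat.sub_le _ _
  have hb2 : r - 1 - j ≤ r := by omega
  rw [if_pos hb1, if_pos hb2] at h
  have hi1 : r - (r - j) = j := by omega
  have hi2 : r - (r - 1 - j) = j + 1 := by omega
  rw [hi1, hi2] at h
  -- reindex the sum
  have hsum : ∑ k ∈ Finset.range (r - j),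
      (if k ≤ r then signedESymm u (r - k) else 0) * etaSeq u (r - 1 - j - k) =
      ∑ μ ∈ Finset.range (r - j), etaSeq u μ * signedESymm u (μ + j + 1) := by
    rw [← Finset.sum_range_reflect]
    refine Finset.sum_congr rfl fun μ hμ => ?_
    rw [Finset.mem_range] at hμ
    have h1 : r - j - 1 - μ ≤ r := by omega
    rw [if_pos h1]
    have h2 : r - (r - j - 1 - μ) = μ + j + 1 := by omega
    have h3 : r - 1 - j - (r - j - 1 - μ) = μ := by omega
    rw [h2, h3, mul_comm]
  rw [hsum] at h
  rw [h]
  -- now pure computation with signs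
  have hpow : ((-1 : R)) ^ (r - 1) * ((-1 : R)) ^ (r - 1 - j) = (-1 : R) ^ j := by
    rw [← pow_add, show r - 1 + (r - 1 - j) = 2 * (r - 1 - j) + j from by omega,
      pow_add, pow_mul]
    simp
  rcases Nat.even_or_odd j with hje | hjo
  · have hrje : ¬ Odd (r - j) ↔ Even (r - j) := by simp [Nat.not_odd_iff_even]
    rcases Nat.even_or_odd (r - j) with he | ho
    · rw [if_pos hje, if_neg (by simp [Nat.not_odd_iff_even, he]), he.neg_one_pow]
      have : ((-1 : R)) ^ j = 1 := hje.neg_one_pow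
      calc (1:R) * signedESymm u j - signedESymm u j +
            ⅟(2:R) * (-1) ^ (r-1) * ((-1) ^ (r-1-j) * signedESymm u (j+1)) +
            ⅟(2:R) * signedESymm u (j+1)
          = (⅟(2:R) * ((-1)^(r-1) * (-1)^(r-1-j)) + ⅟(2:R)) * signedESymm u (j+1) := by ring
        _ = (⅟(2:R) + ⅟(2:R)) * signedESymm u (j+1) := by rw [hpow, this, mul_one]
        _ = -2 * 0 * signedESymm u j + 1 * signedESymm u (j+1) := by
            rw [← two_mul, mul_invOf_self]; ring
    · rw [if_pos hje, if_pos ho, ho.neg_one_pow]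
      have : ((-1 : R)) ^ j = 1 := hje.neg_one_pow
      calc (-1:R) * signedESymm u j - signedESymm u j +
            ⅟(2:R) * (-1) ^ (r-1) * ((-1) ^ (r-1-j) * signedESymm u (j+1)) +
            ⅟(2:R) * signedESymm u (j+1)
          = -2 * signedESymm u j +
              (⅟(2:R) * ((-1)^(r-1) * (-1)^(r-1-j)) + ⅟(2:R)) * signedESymm u (j+1) := by ring
        _ = -2 * signedESymm u j + (⅟(2:R) + ⅟(2:R)) * signedESymm u (j+1) := by rw [hpow, this, mul_one]
        _ = -2 * 1 * signedESymm u j + 1 * signedESymm u (j+1) := by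
            rw [← two_mul, mul_invOf_self]; ring
  · have : ((-1 : R)) ^ j = -1 := hjo.neg_one_pow
    rcases Nat.even_or_odd (r - j) with he | ho
    · rw [if_neg (fun hcontr => (Nat.not_odd_iff_even.mpr hcontr) hjo),
        if_neg (by simp [Nat.not_odd_iff_even, he]), he.neg_one_pow]
      calc (1:R) * signedESymm u j - signedESymm u j +
            ⅟(2:R) * (-1) ^ (r-1) * ((-1) ^ (r-1-j) * signedESymm u (j+1)) +
            ⅟(2:R) * signedESymm u (j+1)
          = (⅟(2:R) * ((-1)^(r-1) * (-1)^(r-1-j)) + ⅟(2:R)) * signedESymm u (j+1) := by ring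
        _ = (⅟(2:R) * (-1) + ⅟(2:R)) * signedESymm u (j+1) := by rw [hpow, this]
        _ = -2 * 0 * signedESymm u j + 0 * signedESymm u (j+1) := by ring
    · rw [if_neg (fun hcontr => (Nat.not_odd_iff_even.mpr hcontr) hjo), if_pos ho, ho.neg_one_pow]
      calc (-1:R) * signedESymm u j - signedESymm u j +
            ⅟(2:R) * (-1) ^ (r-1) * ((-1) ^ (r-1-j) * signedESymm u (j+1)) +
            ⅟(2:R) * signedESymm u (j+1)
          = -2 * signedESymm u j +
              (⅟(2:R) * ((-1)^(r-1) * (-1)^(r-1-j)) + ⅟(2:R)) * signedESymm u (j+1) := by ring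
        _ = -2 * signedESymm u j + (⅟(2:R) * (-1) + ⅟(2:R)) * signedESymm u (j+1) := by
            rw [hpow, this]
        _ = -2 * 1 * signedESymm u j + 0 * signedESymm u (j+1) := by ring

lemma eta_rel_ii (hr : 0 < r) : ∀ a : ℕ,
    ∑ μ ∈ Finset.range (r + 1), signedESymm u μ * etaSeq u (μ + a) = 0 := by
  intro a
  have h := congrArg (PowerSeries.coeff (r + a + 1)) (main_id u)
  rw [mul_left_comm, PowerSeries.coeff_succ_X_mul, coeff_AE] at h
  rw [map_add, map_add, map_sub, PowerSeries.coeff_C_mul, PowerSeries.coeff_C_mul,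
    PowerSeries.coeff_succ_X_mul, PowerSeries.coeff_succ_X_mul, coeff_Aps, coeff_Aps,
    coeff_Bps, coeff_Bps] at h
  rw [if_neg (show ¬ (r + a + 1 ≤ r) by omega)] at h
  -- reduce LHS sum
  have hsum : ∑ k ∈ Finset.range (r + a + 1),
      (if k ≤ r then signedESymm u (r - k) else 0) * etaSeq u (r + a - k) =
      ∑ μ ∈ Finset.range (r + 1), signedESymm u μ * etaSeq u (μ + a) := by
    rw [← Finset.sum_subset (Finset.range_subset_range.mpr (by omega : r + 1 ≤ r + a + 1))
      (fun k _ hk => by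
        rw [Finset.mem_range, not_lt] at hk
        rw [if_neg (by omega), zero_mul])]
    rw [← Finset.sum_range_reflect]
    refine Finset.sum_congr rfl fun μ hμ => ?_
    rw [Finset.mem_range] at hμ
    rw [if_pos (by omega : r + 1 - 1 - μ ≤ r),
      show r - (r + 1 - 1 - μ) = μ from by omega,
      show r + a - (r + 1 - 1 - μ) = μ + a from by omega]
  rw [hsum] at h
  rw [h]
  rcases Nat.eq_zero_or_pos a with ha | ha
  · subst ha
    rw [if_pos (show r + 0 ≤ r by omega)]
    have hpow : ((-1 : R)) ^ (r - 1) * ((-1 : R)) ^ (r + 0) = -1 := by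
      rw [← pow_add, show r - 1 + (r + 0) = 2 * (r - 1) + 1 from by omega, pow_add, pow_mul]
      simp
    calc ((-1:R))^(r+0+1) * 0 - 0 +
          ⅟(2:R) * (-1)^(r-1) * ((-1)^(r+0) * signedESymm u (r - (r+0))) +
          ⅟(2:R) * signedESymm u (r - (r+0))
        = (⅟(2:R) * ((-1)^(r-1) * (-1)^(r+0)) + ⅟(2:R)) * signedESymm u (r - (r+0)) := by ring
      _ = 0 := by rw [hpow]; ring
  · rw [if_neg (show ¬ (r + a ≤ r) by omega)]
    ring

end AdmAux

open AdmAux in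
/-- a sequence (ω_a) satisfies the admissibility relations (i) and (ii) if and
only if ω_a = η_a(u) for all a ≥ 0. -/
theorem admissible_iff_u_admissible {R : Type*} [CommRing R] [Invertible (2 : R)] {r : ℕ}
    (hr : 0 < r) (u : Fin r → R) (ω : ℕ → R) :
    ((∀ j < r, ∑ μ ∈ Finset.range (r - j), ω μ * signedESymm u (μ + j + 1) =
        -2 * (if Odd (r - j) then (1 : R) else 0) * signedESymm u j +
          (if Even j then (1 : R) else 0) * signedESymm u (j + 1)) ∧
     (∀ a : ℕ, ∑ μ ∈ Finset.range (r + 1), signedESymm u μ * ω (μ + a) = 0)) ↔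
    (∀ a : ℕ, ω a = etaSeq u a) := by
  constructor
  · rintro ⟨h1, h2⟩
    intro a
    induction a using Nat.strong_induction_on with
    | _ a ih =>
      by_cases har : a < r
      · have hj : r - 1 - a < r := by omega
        have e1 := h1 (r - 1 - a) hj
        have e2 := eta_rel_i u (r - 1 - a) hj
        rw [show r - (r - 1 - a) = a + 1 from by omega] at e1 e2
        rw [Finset.sum_range_succ] at e1 e2
        rw [show a + (r - 1 - a) + 1 = r from by omega, signedESymm_top] at e1 e2
        have hsum : ∑ μ ∈ Finset.range a, ω μ * signedESymm u (μ + (r - 1 - a) + 1) =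
            ∑ μ ∈ Finset.range a, etaSeq u μ * signedESymm u (μ + (r - 1 - a) + 1) :=
          Finset.sum_congr rfl fun μ hμ => by
            rw [ih μ (lt_of_lt_of_le (Finset.mem_range.mp hμ) (by omega))]
        have hωa := e1.trans e2.symm
        rw [hsum] at hωa
        have := add_left_cancel hωa
        simpa using this
      · push_neg at har
        have e1 := h2 (a - r)
        have e2 := eta_rel_ii u hr (a - r)
        rw [Finset.sum_range_succ, signedESymm_top,
          show r + (a - r) = a from by omega, one_mul] at e1 e2
        have hsum : ∑ μ ∈ Finset.range r, signedESymm u μ * ω (μ + (a - r)) =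
            ∑ μ ∈ Finset.range r, signedESymm u μ * etaSeq u (μ + (a - r)) :=
          Finset.sum_congr rfl fun μ hμ => by
            rw [ih (μ + (a - r)) (by have := Finset.mem_range.mp hμ; omega)]
        rw [hsum] at e1
        have := e1.trans e2.symm
        exact add_left_cancel this
  · intro h
    constructor
    · intro j hj
      simp only [h]
      exact eta_rel_i u j hj
    · intro a
      simp only [h]
      exact eta_rel_ii u hr a
end

section
/- Let F be a field of characteristic ≠ 2 and u_1,...,u_r ∈ F pairwise distinct with u_i + u_j ≠ 0 for all i,j. Define γ_i = (2u_i - (-1)^r)·∏_{j≠i} (u_i+u_j)/(u_i-u_j). Then (γ_1,...,γ_r) is the unique solution of the linear system ∑_{k=1}^r γ_k/(u_j+u_k) = 1 + 1/(2u_j), for j = 1,...,r. -/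
open Finset Polynomial

private lemma lag_eval {F : Type*} [Field F] {n : ℕ} {v : Fin n → F} (hv : Function.Injective v)
    (p : F[X]) (hp : p.degree < n) (x : F) :
    p.eval x = ∑ k, p.eval (v k) * ∏ m ∈ univ.erase k, (x - v m) / (v k - v m) := by
  have h := Lagrange.eq_interpolate (s := univ) (v := v) (f := p) hv.injOn (by simpa using hp)
  conv_lhs => rw [h]
  rw [Lagrange.interpolate_apply, eval_finset_sum]
  refine Finset.sum_congr rfl fun k _ => ?_
  rw [eval_mul, eval_C, Lagrange.basis, eval_prod]
  congr 1
  refine Finset.prod_congr rfl fun m hm => ?_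
  rw [Lagrange.basisDivisor, eval_mul, eval_C, eval_sub, eval_X, eval_C, div_eq_inv_mul]

private lemma erase_zero_eq {n : ℕ} :
    (univ : Finset (Fin (n+1))).erase 0 = univ.map (Fin.succEmb n) := by
  ext x
  simp only [mem_erase, mem_univ, and_true, mem_map, Fin.coe_succEmb]
  rw [← Fin.exists_succ_eq]
  simp [eq_comm]

private lemma prod_erase_zero {M : Type*} [CommMonoid M] {n : ℕ} (g : Fin (n+1) → M) :
    ∏ m ∈ univ.erase 0, g m = ∏ m : Fin n, g m.succ := by
  rw [erase_zero_eq, Finset.prod_map]; rfl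

private lemma erase_succ_eq {n : ℕ} (k : Fin n) :
    (univ : Finset (Fin (n+1))).erase k.succ
      = insert 0 ((univ.erase k).map (Fin.succEmb n)) := by
  ext x
  simp only [mem_erase, mem_univ, and_true, mem_insert, mem_map, Fin.coe_succEmb]
  constructor
  · intro hx
    rcases Fin.eq_zero_or_eq_succ x with h | ⟨y, rfl⟩
    · exact Or.inl h
    · exact Or.inr ⟨y, ⟨fun h => hx (by rw [h]), by simp⟩⟩
  · rintro (rfl | ⟨y, hy, rfl⟩)
    · exact (Fin.succ_ne_zero k).symm
    · simpa [Fin.succ_inj] using hy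

private lemma prod_erase_succ {M : Type*} [CommMonoid M] {n : ℕ} (g : Fin (n+1) → M) (k : Fin n) :
    ∏ m ∈ univ.erase k.succ, g m = g 0 * ∏ m ∈ univ.erase k, g m.succ := by
  rw [erase_succ_eq, Finset.prod_insert (by simp [Fin.succ_ne_zero, eq_comm]),
    Finset.prod_map]; rfl

/-- γ_i = (2u_i - (-1)^r)·∏_{j≠i} (u_i+u_j)/(u_i-u_j) is the unique solution of
the system ∑_k γ_k/(u_j+u_k) = 1 + 1/(2u_j), j = 1,…,r. -/
theorem gamma_unique_solution {F : Type*} [Field F] (h2 : (2 : F) ≠ 0) {r : ℕ}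
    (u : Fin r → F) (hinj : Function.Injective u) (hsum : ∀ i j, u i + u j ≠ 0) :
    (∀ j, ∑ k, ((2 * u k - (-1) ^ r) * ∏ l ∈ Finset.univ.erase k, (u k + u l) / (u k - u l)) /
        (u j + u k) = 1 + 1 / (2 * u j)) ∧
    (∀ g : Fin r → F, (∀ j, ∑ k, g k / (u j + u k) = 1 + 1 / (2 * u j)) →
      ∀ i, g i = (2 * u i - (-1) ^ r) * ∏ l ∈ Finset.univ.erase i, (u i + u l) / (u i - u l)) := by
  classical
  have hne : ∀ {k l : Fin r}, k ≠ l → u k - u l ≠ 0 :=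
    fun h => sub_ne_zero.mpr fun he' => h (hinj he')
  have hu0 : ∀ k, u k ≠ 0 := fun k hk => hsum k k (by rw [hk, add_zero])
  have hCc : ∀ k : Fin r, (∏ m ∈ univ.erase k, (u k - u m)) ≠ 0 := fun k =>
    Finset.prod_ne_zero_iff.mpr fun m hm => hne (Ne.symm (Finset.ne_of_mem_erase hm))
  set e : F := (-1) ^ r with he
  -- polynomials
  set N : F[X] := ∏ l, (X + C (u l)) with hN
  set D : F[X] := ∏ l, (X - C (u l)) with hD
  have hNm : N.Monic := monic_prod_of_monic _ _ fun l _ => monic_X_add_C _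
  have hDm : D.Monic := monic_prod_of_monic _ _ fun l _ => monic_X_sub_C _
  have hNdeg : N.degree = r := by
    rw [hN, degree_prod]
    simp [degree_X_add_C]
  have hDdeg : D.degree = r := by
    rw [hD, degree_prod]
    simp [degree_X_sub_C]
  have evN : ∀ x, N.eval x = ∏ l, (x + u l) := fun x => by simp [hN, eval_prod]
  have evD : ∀ x, D.eval x = ∏ l, (x - u l) := fun x => by simp [hD, eval_prod]
  -- the existence statement
  have hex : ∀ j, ∑ k, ((2 * u k - e) * ∏ l ∈ univ.erase k, (u k + u l) / (u k - u l)) /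
      (u j + u k) = 1 + 1 / (2 * u j) := by
    intro j
    have hr0 : 0 < r := j.pos
    set s : F := (-1) ^ (r - 1) with hsdef
    have hs : e = s * (-1) := by rw [he, hsdef, ← pow_succ]; congr 1; omega
    have hsne : s ≠ 0 := pow_ne_zero _ (by norm_num)
    have hss : s * s = 1 := by
      rw [hsdef, ← pow_add, Even.neg_one_pow ⟨r - 1, rfl⟩]
    have hes : e * s = -1 := by rw [hs]; linear_combination -hss
    set P : F := ∏ l, (u j + u l) with hPdef
    have hP : P ≠ 0 := Finset.prod_ne_zero_iff.mpr fun l _ => hsum j l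
    set A : Fin r → F := fun k => ∏ m ∈ univ.erase k, (u j + u m) with hAdef
    set B : Fin r → F := fun k => ∏ m ∈ univ.erase k, (u k + u m) with hBdef
    set Cc : Fin r → F := fun k => ∏ m ∈ univ.erase k, (u k - u m) with hCcdef
    have hPA : ∀ k, P = (u j + u k) * A k := fun k =>
      (Finset.mul_prod_erase univ _ (mem_univ k)).symm
    have hA : ∀ k, A k ≠ 0 := fun k =>
      Finset.prod_ne_zero_iff.mpr fun m _ => hsum j m
    have h2uj : 2 * u j ≠ 0 := mul_ne_zero h2 (hu0 j)
    -- generic product computations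
    have m1 : ∀ k, (∏ l, (u k + u l)) = 2 * u k * B k := by
      intro k
      rw [← Finset.mul_prod_erase univ _ (mem_univ k), hBdef]
      ring
    have m2 : ∀ k, (∏ m ∈ univ.erase k, (-(u j) - u m) / (u k - u m)) = s * A k / Cc k := by
      intro k
      rw [Finset.prod_div_distrib]
      have : (∏ m ∈ univ.erase k, (-(u j) - u m)) = s * A k := by
        rw [show (∏ m ∈ univ.erase k, (-(u j) - u m))
            = ∏ m ∈ univ.erase k, (-1) * (u j + u m) from
          Finset.prod_congr rfl fun m _ => by ring]
        rw [Finset.prod_mul_distrib, Finset.prod_const, card_erase_of_mem (mem_univ k),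
          card_univ, Fintype.card_fin, hAdef, hsdef]
      rw [this]
    have z1 : (∏ l, (-(u j) + u l)) = 0 :=
      Finset.prod_eq_zero (mem_univ j) (neg_add_cancel _)
    have z2 : ∀ k : Fin r, (∏ l, (u k - u l)) = 0 := fun k =>
      Finset.prod_eq_zero (mem_univ k) (sub_self _)
    have m3 : (∏ l, (-(u j) - u l)) = e * P := by
      rw [show (∏ l, (-(u j) - u l)) = ∏ l, (-1) * (u j + u l) from
        Finset.prod_congr rfl fun m _ => by ring]
      rw [Finset.prod_mul_distrib, Finset.prod_const, card_univ, Fintype.card_fin, he, hPdef]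
    -- Identity I
    have hdegsub : (N - D).degree < (r : WithBot ℕ) := by
      have hd1 : N.degree = D.degree := by rw [hNdeg, hDdeg]
      have hd2 : N.leadingCoeff = D.leadingCoeff := by rw [hNm.leadingCoeff, hDm.leadingCoeff]
      have := Polynomial.degree_sub_lt hd1 hNm.ne_zero hd2
      rwa [hNdeg] at this
    have key := lag_eval hinj (N - D) hdegsub (-(u j))
    simp only [eval_sub, evN, evD, z1, z2, m1, m2, m3, zero_sub, sub_zero] at key
    -- key : -(e * P) = ∑ k, 2 * u k * B k * (s * A k / Cc k)
    have key2 : s * P = s * ∑ k, 2 * u k * B k * A k / Cc k := by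
      calc s * P = -(e * P) := by rw [hs]; ring
        _ = ∑ k, 2 * u k * B k * (s * A k / Cc k) := key
        _ = s * ∑ k, 2 * u k * B k * A k / Cc k := by
            rw [Finset.mul_sum]
            exact Finset.sum_congr rfl fun k _ => by ring
    have S1 : ∑ k, 2 * u k * B k * A k / Cc k = P := (mul_left_cancel₀ hsne key2).symm
    -- Identity II
    set w : Fin (r + 1) → F := Fin.cons 0 u with hwdef
    have hw : Function.Injective w := by
      apply Fin.cons_injective_of_injective _ hinj
      rintro ⟨k, hk⟩
      exact hu0 k hk
    have hNdeg2 : N.degree < ((r + 1 : ℕ) : WithBot ℕ) := by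
      rw [hNdeg]; exact_mod_cast Nat.lt_succ_self r
    have key' := lag_eval hw N hNdeg2 (-(u j))
    rw [Fin.sum_univ_succ] at key'
    simp only [prod_erase_zero, prod_erase_succ, hwdef, Fin.cons_zero, Fin.cons_succ,
      evN, z1, m1, m2, zero_add] at key'
    -- key' : 0 = (∏ l, u l) * ∏ m, (-(u j) - u m)/(0 - u m)
    --          + ∑ k, 2 * u k * B k * ((-(u j) - 0)/(u k - 0) * (s * A k / Cc k))
    have hPu : (∏ l, u l) ≠ 0 := Finset.prod_ne_zero_iff.mpr fun l _ => hu0 l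
    have t0 : (∏ l, u l) * ∏ m, (-(u j) - u m) / (0 - u m) = P := by
      rw [show (∏ m, (-(u j) - u m) / (0 - u m)) = ∏ m, (u j + u m) / u m from
        Finset.prod_congr rfl fun m _ => by
          rw [show -(u j) - u m = -(u j + u m) by ring, show (0:F) - u m = -(u m) by ring,
            neg_div_neg_eq]]
      rw [Finset.prod_div_distrib, ← hPdef, mul_comm, div_mul_cancel₀ _ hPu]
    have tk : ∀ k, 2 * u k * B k * ((-(u j) - 0) / (u k - 0) * (s * A k / Cc k))
        = (-2 * u j * s) * (B k * A k / Cc k) := by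
      intro k
      field_simp [hu0 k, hCc k]
      ring
    rw [t0] at key'
    have key'2 : 0 = P + (-2 * u j * s) * ∑ k, B k * A k / Cc k := by
      rw [key', Finset.mul_sum]
      congr 1
      exact Finset.sum_congr rfl fun k _ => tk k
    have S2 : ∑ k, B k * A k / Cc k = s * P / (2 * u j) := by
      rw [eq_div_iff h2uj]
      linear_combination s * key'2 + (-(2 * u j * ∑ k, B k * A k / Cc k)) * hss
    -- combine
    have expand : ∑ k, ((2 * u k - e) * ∏ l ∈ univ.erase k, (u k + u l) / (u k - u l)) /
          (u j + u k)
        = (∑ k, 2 * u k * B k * A k / Cc k) / P - (e / P) * ∑ k, B k * A k / Cc k := by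
      rw [Finset.sum_div, Finset.mul_sum, ← Finset.sum_sub_distrib]
      refine Finset.sum_congr rfl fun k _ => ?_
      rw [Finset.prod_div_distrib,
        show (∏ l ∈ univ.erase k, (u k + u l)) = B k from rfl,
        show (∏ l ∈ univ.erase k, (u k - u l)) = Cc k from rfl, hPA k]
      field_simp [hsum j k, hA k, hCc k]
    rw [expand, S1, S2]
    field_simp
    have hes' : ((-1 : F) ^ r) * (-1) ^ (r - 1) = -1 := by rw [← he, ← hsdef]; exact hes
    linear_combination (-(u j)⁻¹) * hes'
  refine ⟨hex, ?_⟩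
  intro g hg i
  have hr0 : 0 < r := i.pos
  -- difference satisfies homogeneous system
  set γ : Fin r → F := fun k =>
    (2 * u k - e) * ∏ l ∈ univ.erase k, (u k + u l) / (u k - u l) with hγ
  set d : Fin r → F := fun k => g k - γ k with hd
  have hdz : ∀ j, ∑ k, d k / (u j + u k) = 0 := by
    intro j
    have := hg j
    rw [← hex j] at this
    rw [show (∑ k, d k / (u j + u k))
        = ∑ k, g k / (u j + u k) - ∑ k, γ k / (u j + u k) by
      rw [← Finset.sum_sub_distrib]
      exact Finset.sum_congr rfl fun k _ => by rw [hd, sub_div]]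
    rw [this, sub_self]
  set Q : F[X] := ∑ k, C (d k) * ∏ m ∈ univ.erase k, (X + C (u m)) with hQ
  have hdegQ : Q.degree < (r : WithBot ℕ) := by
    apply lt_of_le_of_lt (degree_sum_le _ _)
    rw [Finset.sup_lt_iff (by exact_mod_cast WithBot.bot_lt_coe r)]
    intro k _
    apply lt_of_le_of_lt (degree_mul_le _ _)
    have h1 : (C (d k)).degree ≤ 0 := degree_C_le
    have h2' : (∏ m ∈ univ.erase k, (X + C (u m))).degree ≤ ((r - 1 : ℕ) : WithBot ℕ) := by
      apply le_trans (degree_prod_le _ _)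
      rw [Finset.sum_congr rfl (fun m _ => degree_X_add_C (u m))]
      simp [Finset.sum_const, card_erase_of_mem (mem_univ k), card_univ]
    calc (C (d k)).degree + (∏ m ∈ univ.erase k, (X + C (u m))).degree
        ≤ 0 + ((r - 1 : ℕ) : WithBot ℕ) := add_le_add h1 h2'
      _ = ((r - 1 : ℕ) : WithBot ℕ) := by rw [zero_add]
      _ < (r : WithBot ℕ) := by exact_mod_cast Nat.sub_lt hr0 one_pos
  have evQ : ∀ x, Q.eval x = ∑ k, d k * ∏ m ∈ univ.erase k, (x + u m) := by
    intro x
    rw [hQ, eval_finset_sum]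
    exact Finset.sum_congr rfl fun k _ => by simp [eval_prod]
  have hQz : ∀ j, Q.eval (u j) = 0 := by
    intro j
    rw [evQ]
    have : ∀ k, d k * ∏ m ∈ univ.erase k, (u j + u m)
        = (d k / (u j + u k)) * ∏ l, (u j + u l) := by
      intro k
      rw [← Finset.mul_prod_erase univ (fun l => u j + u l) (mem_univ k)]
      field_simp [hsum j k]
    rw [Finset.sum_congr rfl fun k _ => this k, ← Finset.sum_mul, hdz j, zero_mul]
  have key := lag_eval hinj Q hdegQ (-(u i))
  simp only [hQz, zero_mul, Finset.sum_const_zero] at key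
  rw [evQ] at key
  have hsingle : ∑ k, d k * ∏ m ∈ univ.erase k, (-(u i) + u m)
      = d i * ∏ m ∈ univ.erase i, (-(u i) + u m) := by
    refine Finset.sum_eq_single i (fun k _ hk => ?_) (fun h => absurd (mem_univ i) h)
    have hz : (∏ m ∈ univ.erase k, (-(u i) + u m)) = 0 :=
      Finset.prod_eq_zero (Finset.mem_erase.mpr ⟨Ne.symm hk, mem_univ i⟩) (neg_add_cancel (u i))
    rw [hz, mul_zero]
  rw [hsingle] at key
  have hprodne : (∏ m ∈ univ.erase i, (-(u i) + u m)) ≠ 0 :=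
    Finset.prod_ne_zero_iff.mpr fun m hm => by
      rw [show -(u i) + u m = -(u i - u m) by ring, neg_ne_zero]
      exact hne (Finset.ne_of_mem_erase hm).symm
  have : d i = 0 := by
    rcases mul_eq_zero.mp key with h | h
    · exact h
    · exact absurd h hprodne
  have h0 : g i - γ i = 0 := by simpa [hd] using this
  have h1 : g i = γ i := sub_eq_zero.mp h0
  simpa [hγ] using h1
end
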